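/- arXiv:1301.0129 — 4 statements merged into one kernel-verified Lean document; each statement's English description precedes it below -/
import Mathlib

section
/- Fix b > 1 and define nAdicCons_b : ℕ × ℕ → ℕ by nAdicCons_b(x, y') = b^x * (y' + (y' / (b-1)) + 1), where / is integer division. Then nAdicCons_b is a bijection from ℕ × ℕ onto the positive natural numbers. -/
private lemma divmod_helper (m q r : ℕ) (hm : 0 < m) (hr : r < m) :
    (m * q + r) / m = q ∧ (m * q + r) % m = r := by
  constructor
  · rw [add_comm, Nat.add_mul_div_left _ _ hm, Nat.div_eq_of_lt hr]
    omega
  · rw [add_comm, Nat.add_mul_mod_self_left, Nat.mod_eq_of_lt hr]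

private lemma gkey (c y : ℕ) :
    y + y / (c + 1) + 1 = (c + 2) * (y / (c + 1)) + (y % (c + 1) + 1) := by
  obtain ⟨q, r, hr, rfl⟩ : ∃ q r, r < c + 1 ∧ y = (c + 1) * q + r :=
    ⟨y / (c + 1), y % (c + 1), Nat.mod_lt _ (by omega),
      (Nat.div_add_mod y (c + 1)).symm⟩
  obtain ⟨hd, hm⟩ := divmod_helper (c + 1) q r (by omega) hr
  rw [hd, hm]
  ring

private lemma divmod_pair (m q r q' r' : ℕ) (hm : 0 < m) (hr : r < m)
    (hr' : r' < m) (h : m * q + r = m * q' + r') : q = q' ∧ r = r' := by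
  obtain ⟨hd, hmm⟩ := divmod_helper m q r hm hr
  obtain ⟨hd', hmm'⟩ := divmod_helper m q' r' hm hr'
  constructor
  · rw [← hd, ← hd', h]
  · rw [← hmm, ← hmm', h]

private lemma g_not_dvd (c y : ℕ) : ¬ (c + 2) ∣ (y + y / (c + 1) + 1) := by
  rw [gkey]
  rintro ⟨k, hk⟩
  have hr : y % (c + 1) < c + 1 := Nat.mod_lt _ (by omega)
  have h : (c + 2) * (y / (c + 1)) + (y % (c + 1) + 1) = (c + 2) * k + 0 := by
    omega
  obtain ⟨-, h2⟩ := divmod_pair (c + 2) (y / (c + 1)) (y % (c + 1) + 1) k 0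
    (by omega) (by omega) (by omega) h
  omega

private lemma g_inj (c y1 y2 : ℕ)
    (h : y1 + y1 / (c + 1) + 1 = y2 + y2 / (c + 1) + 1) : y1 = y2 := by
  rw [gkey, gkey] at h
  have h1 : y1 % (c + 1) < c + 1 := Nat.mod_lt _ (by omega)
  have h2 : y2 % (c + 1) < c + 1 := Nat.mod_lt _ (by omega)
  obtain ⟨hq, hr⟩ := divmod_pair (c + 2) (y1 / (c + 1)) (y1 % (c + 1) + 1)
    (y2 / (c + 1)) (y2 % (c + 1) + 1) (by omega) (by omega) (by omega) h
  have e1 := Nat.div_add_mod y1 (c + 1)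
  have e2 := Nat.div_add_mod y2 (c + 1)
  rw [hq] at e1
  omega

private lemma g_surj (c : ℕ) (n : ℕ) (hn : 0 < n) (hnd : ¬ (c + 2) ∣ n) :
    ∃ y, y + y / (c + 1) + 1 = n := by
  have hs : 0 < n % (c + 2) := by
    rcases Nat.eq_zero_or_pos (n % (c + 2)) with h | h
    · exact absurd (Nat.dvd_of_mod_eq_zero h) hnd
    · exact h
  have hslt : n % (c + 2) < c + 2 := Nat.mod_lt _ (by omega)
  refine ⟨(c + 1) * (n / (c + 2)) + (n % (c + 2) - 1), ?_⟩
  obtain ⟨hd, -⟩ := divmod_helper (c + 1) (n / (c + 2)) (n % (c + 2) - 1)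
    (by omega) (by omega)
  rw [hd]
  have hnm := Nat.div_add_mod n (c + 2)
  set q := n / (c + 2)
  set s := n % (c + 2)
  have hq : (c + 2) * q = (c + 1) * q + q := by ring
  omega

private lemma pow_cancel (b : ℕ) (hb : 1 < b) :
    ∀ x x' m m', ¬ b ∣ m → ¬ b ∣ m' → b ^ x * m = b ^ x' * m' →
      x = x' ∧ m = m' := by
  intro x
  induction x with
  | zero =>
    intro x' m m' hm hm' h
    cases x' with
    | zero => simpa using h
    | succ k =>
      exfalso
      apply hm
      rw [pow_zero, one_mul] at h
      exact ⟨b ^ k * m', by rw [h]; ring⟩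
  | succ k ih =>
    intro x' m m' hm hm' h
    cases x' with
    | zero =>
      exfalso
      apply hm'
      rw [pow_zero, one_mul] at h
      exact ⟨b ^ k * m, by rw [← h]; ring⟩
    | succ j =>
      have hb0 : 0 < b := by omega
      have h' : b ^ k * m = b ^ j * m' := by
        have e1 : b * (b ^ k * m) = b ^ (k + 1) * m := by ring
        have e2 : b * (b ^ j * m') = b ^ (j + 1) * m' := by ring
        exact Nat.eq_of_mul_eq_mul_left hb0 (by rw [e1, e2, h])
      obtain ⟨h1, h2⟩ := ih j m m' hm hm' h'
      exact ⟨by omega, h2⟩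

private lemma f_surj (c : ℕ) : ∀ n, 0 < n →
    ∃ p : ℕ × ℕ, (c + 2) ^ p.1 * (p.2 + p.2 / (c + 1) + 1) = n := by
  intro n
  induction n using Nat.strong_induction_on with
  | _ n ih =>
    intro hn
    by_cases hd : (c + 2) ∣ n
    · obtain ⟨k, rfl⟩ := hd
      have hk : 0 < k := by
        rcases Nat.eq_zero_or_pos k with h | h
        · subst h; simp at hn
        · exact h
      have hlt : k < (c + 2) * k := by nlinarith
      obtain ⟨⟨x, y⟩, hp⟩ := ih k hlt hk
      refine ⟨(x + 1, y), ?_⟩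
      show (c + 2) ^ (x + 1) * (y + y / (c + 1) + 1) = (c + 2) * k
      rw [pow_succ, mul_comm ((c + 2) ^ x) (c + 2), mul_assoc, hp]
    · obtain ⟨y, hy⟩ := g_surj c n hn hd
      exact ⟨(0, y), by simpa using hy⟩

theorem stmt4 (b : ℕ) (hb : 1 < b) :
    Set.BijOn (fun p : ℕ × ℕ => b ^ p.1 * (p.2 + p.2 / (b - 1) + 1))
      Set.univ {n : ℕ | 0 < n} := by
  obtain ⟨c, rfl⟩ : ∃ c, b = c + 2 := ⟨b - 2, by omega⟩
  have hc : c + 2 - 1 = c + 1 := rfl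
  refine ⟨?_, ?_, ?_⟩
  · intro p _
    simp only [Set.mem_setOf_eq, hc]
    exact Nat.mul_pos (Nat.pow_pos (by omega)) (Nat.succ_pos _)
  · intro p1 _ p2 _ h
    simp only [hc] at h
    obtain ⟨h1, h2⟩ := pow_cancel (c + 2) (by omega) p1.1 p2.1 _ _
      (g_not_dvd c p1.2) (g_not_dvd c p2.2) h
    exact Prod.ext h1 (g_inj c _ _ h2)
  · intro n hn
    simp only [Set.mem_setOf_eq] at hn
    obtain ⟨p, hp⟩ := f_surj c n hn
    refine ⟨p, Set.mem_univ _, ?_⟩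
    simp only [hc]
    exact hp
end

section
/- Fix b > 1 and define nAdicPair_b : ℕ × ℕ → ℕ by nAdicPair_b(x, y') = b^x * (y' + (y' / (b-1)) + 1) - 1. Then nAdicPair_b is a bijection from ℕ × ℕ to ℕ. -/
private lemma stmt5_mod (b : ℕ) (hb : 1 < b) (y : ℕ) :
    (y + y / (b - 1) + 1) % b = y % (b - 1) + 1 := by
  set m := b - 1 with hm
  have hm0 : 0 < m := by omega
  have hdm := Nat.div_add_mod y m
  have hb1 : b = m + 1 := by omega
  have key : y + y / m + 1 = (y / m) * b + (y % m + 1) := by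
    calc y + y / m + 1 = (m * (y / m) + y % m) + y / m + 1 := by rw [hdm]
    _ = (y / m) * (m + 1) + (y % m + 1) := by ring
    _ = (y / m) * b + (y % m + 1) := by rw [← hb1]
  rw [key, add_comm, Nat.add_mul_mod_self_right]
  exact Nat.mod_eq_of_lt (by have := Nat.mod_lt y hm0; omega)

private lemma stmt5_notdvd (b : ℕ) (hb : 1 < b) (y : ℕ) :
    ¬ b ∣ (y + y / (b - 1) + 1) := by
  intro h
  have := stmt5_mod b hb y
  have h0 : (y + y / (b - 1) + 1) % b = 0 := Nat.mod_eq_zero_of_dvd h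
  omega

private lemma stmt5_dvd_of_lt (b x1 x2 k1 k2 : ℕ) (hb : 1 < b) (hlt : x1 < x2)
    (heq : b ^ x1 * k1 = b ^ x2 * k2) : b ∣ k1 := by
  have hpow2 : b ^ x2 = b ^ x1 * b ^ (x2 - x1) := by
    rw [← pow_add]; congr 1; omega
  rw [hpow2, mul_assoc] at heq
  have hpos : 0 < b ^ x1 := pow_pos (by omega) _
  have hk : k1 = b ^ (x2 - x1) * k2 := Nat.eq_of_mul_eq_mul_left hpos heq
  have hdvd : b ∣ b ^ (x2 - x1) := dvd_pow_self b (by omega)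
  exact hk ▸ hdvd.mul_right k2

private lemma stmt5_rep (b : ℕ) (hb : 1 < b) :
    ∀ n, 0 < n → ∃ x k, 0 < k ∧ ¬ b ∣ k ∧ n = b ^ x * k := by
  intro n
  induction n using Nat.strong_induction_on with
  | _ n ih =>
    intro hn
    by_cases h : b ∣ n
    · obtain ⟨n', rfl⟩ := h
      have hn' : 0 < n' := by
        rcases Nat.eq_zero_or_pos n' with h0 | h0
        · simp [h0] at hn
        · exact h0
      have hlt : n' < b * n' := by
        calc n' = 1 * n' := (one_mul n').symm
        _ < b * n' := by exact (Nat.mul_lt_mul_right hn').mpr hb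
      obtain ⟨x, k, hk0, hnd, hnk⟩ := ih n' hlt hn'
      exact ⟨x + 1, k, hk0, hnd, by rw [hnk, pow_succ]; ring⟩
    · exact ⟨0, n, hn, h, by simp⟩

theorem stmt5 (b : ℕ) (hb : 1 < b) :
    Function.Bijective
      (fun p : ℕ × ℕ => b ^ p.1 * (p.2 + p.2 / (b - 1) + 1) - 1) := by
  have hm0 : 0 < b - 1 := by omega
  constructor
  · rintro ⟨x1, y1⟩ ⟨x2, y2⟩ h
    simp only at h
    set m := b - 1 with hm
    set k1 := y1 + y1 / m + 1 with hk1def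
    set k2 := y2 + y2 / m + 1 with hk2def
    have hp1 : 0 < b ^ x1 * k1 := Nat.mul_pos (pow_pos (by omega) _) (Nat.succ_pos _)
    have hp2 : 0 < b ^ x2 * k2 := Nat.mul_pos (pow_pos (by omega) _) (Nat.succ_pos _)
    have heq : b ^ x1 * k1 = b ^ x2 * k2 := by omega
    have hnd1 : ¬ b ∣ k1 := stmt5_notdvd b hb y1
    have hnd2 : ¬ b ∣ k2 := stmt5_notdvd b hb y2
    have hx : x1 = x2 := by
      rcases lt_trichotomy x1 x2 with hlt | he | hlt
      · exact absurd (stmt5_dvd_of_lt b x1 x2 k1 k2 hb hlt heq) hnd1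
      · exact he
      · exact absurd (stmt5_dvd_of_lt b x2 x1 k2 k1 hb hlt heq.symm) hnd2
    subst hx
    have hk : k1 = k2 := Nat.eq_of_mul_eq_mul_left (pow_pos (by omega) _) heq
    have hy : y1 = y2 := by
      rcases lt_trichotomy y1 y2 with hlt | he | hlt
      · have hd := Nat.div_le_div_right (c := m) (le_of_lt hlt)
        rw [hk1def, hk2def] at hk; linarith
      · exact he
      · have hd := Nat.div_le_div_right (c := m) (le_of_lt hlt)
        rw [hk1def, hk2def] at hk; linarith
    simp [hy]
  · intro n
    obtain ⟨x, k, hk0, hnd, hnk⟩ := stmt5_rep b hb (n + 1) (by omega)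
    set m := b - 1 with hm
    set s := k % b with hs
    set q := k / b with hq
    have hsb : s < b := Nat.mod_lt _ (by omega)
    have hs0 : s ≠ 0 := fun h0 => hnd (Nat.dvd_of_mod_eq_zero h0)
    have hdm : b * q + s = k := Nat.div_add_mod k b
    refine ⟨(x, q * m + (s - 1)), ?_⟩
    simp only
    have hdiv : (q * m + (s - 1)) / m = q := by
      rw [mul_comm, Nat.mul_add_div hm0, Nat.div_eq_of_lt (by omega), Nat.add_zero]
    have hk : q * m + (s - 1) + (q * m + (s - 1)) / m + 1 = k := by
      rw [hdiv]
      have hb1 : b = m + 1 := by omega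
      have h2 : b * q = q * m + q := by rw [hb1]; ring
      have hs1 : s - 1 + 1 = s := by omega
      linarith [hdm, h2, hs1]
    rw [hk, ← hnk]
    omega
end

section
/- Fix b > 1. For any x, y' ∈ ℕ, the value z = b^x * (y' + (y' / (b-1)) + 1) satisfies: the b-adic valuation of z equals x, i.e., b^x divides z but b^(x+1) does not. -/
theorem stmt6 (b : ℕ) (hb : 1 < b) (x y' : ℕ) :
    b ^ x ∣ b ^ x * (y' + y' / (b - 1) + 1) ∧
    ¬ b ^ (x + 1) ∣ b ^ x * (y' + y' / (b - 1) + 1) := by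
  constructor
  · exact Dvd.intro _ rfl
  · intro h
    have hbx : 0 < b ^ x := pow_pos (by omega) x
    rw [pow_succ] at h
    have hdvd : b ∣ (y' + y' / (b - 1) + 1) :=
      (Nat.mul_dvd_mul_iff_left hbx).mp h
    obtain ⟨k, hk⟩ := hdvd
    set q := y' / (b - 1) with hq
    set r := y' % (b - 1) with hr
    have h1 : (b - 1) * q + r = y' := Nat.div_add_mod y' (b - 1)
    have h2 : r < b - 1 := Nat.mod_lt _ (by omega)
    have h3 : (b - 1) * q = b * q - q := by rw [Nat.sub_one_mul]
    have h4 : q ≤ b * q := Nat.le_mul_of_pos_left q (by omega)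
    -- so y' + q + 1 = b*q + r + 1 = b*k
    have h5 : b * q + r + 1 = b * k := by omega
    rcases le_or_gt k q with hkq | hkq
    · have := Nat.mul_le_mul_left b hkq
      omega
    · have h6 : b * (q + 1) ≤ b * k := Nat.mul_le_mul_left b hkq
      rw [Nat.mul_add, Nat.mul_one] at h6
      omega
end

section
/- Fix b > 1. For all x, y ∈ ℕ, decomposing nAdicCons_b(x, y) via nAdicDeCons_b recovers (x, y): that is, the head of b^x * (y + y/(b−1) + 1) is x and its tail is y, where the head of z > 0 is ν_b(z) and the tail is (z / b^{ν_b(z)}) − (z / b^{ν_b(z)}) / b − 1. -/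
theorem stmt19 (b : ℕ) (hb : 1 < b) (x y : ℕ) :
    padicValNat b (b ^ x * (y + y / (b - 1) + 1)) = x ∧
    (b ^ x * (y + y / (b - 1) + 1)) / b ^ padicValNat b (b ^ x * (y + y / (b - 1) + 1)) -
      ((b ^ x * (y + y / (b - 1) + 1)) / b ^ padicValNat b (b ^ x * (y + y / (b - 1) + 1))) / b -
      1 = y := by
  have hb1 : 0 < b - 1 := by omega
  set q := y / (b - 1) with hq
  set r := y % (b - 1) with hr
  have hy : (b - 1) * q + r = y := Nat.div_add_mod y (b - 1)
  have hrlt : r < b - 1 := Nat.mod_lt _ hb1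
  set m := y + q + 1 with hm
  have hqb : q * b = q * (b - 1) + q := by
    rw [← Nat.mul_succ]; congr 1; omega
  have hmb : m = b * q + (r + 1) := by nlinarith [hqb, hy]
  have hm0 : 0 < m := by omega
  have hmod : m % b = r + 1 := by
    rw [hmb, Nat.mul_add_mod, Nat.mod_eq_of_lt (by omega)]
  have hndvd : ¬ b ∣ m := by
    intro h
    have := (Nat.mod_eq_zero_of_dvd h)
    omega
  have hmdiv : m / b = q := by
    rw [hmb, Nat.mul_add_div (by omega), Nat.div_eq_of_lt (by omega), Nat.add_zero]
  have hmaxm : b.maxPowDiv m = 0 := by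
    by_contra h
    apply hndvd
    calc b = b ^ 1 := (pow_one b).symm
    _ ∣ b ^ b.maxPowDiv m := pow_dvd_pow b (by omega)
    _ ∣ m := Nat.maxPowDiv.pow_dvd (p := b) (n := m)
  have hval : padicValNat b (b ^ x * m) = x := by
    rw [Nat.maxPowDiv.base_pow_mul hb hm0.ne', show padicValNat b m = 0 from hmaxm, zero_add]
  refine ⟨hval, ?_⟩
  rw [hval, Nat.mul_div_cancel_left m (Nat.pow_pos (n := x) (by omega) : 0 < b ^ x), hmdiv]
  omega
end
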